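/- Let d ≥ 3 be an integer, σ > 0, and let α be a Borel probability measure on ℝ^d. Fix y ∈ ℝ^d with α({y}) = 0 and ∫ |x−y|^{2−d} α(dx) < ∞, and suppose 0 < h(y) < ∞. Let ν_y be the probability measure on ℝ^d defined by ν_y(A) := (1/h(y)) ∫_A G_{σ²}(x,y) α(dx). Then for all ε, δ, r > 0 such that α(B(y,r)) > ε, one has ν_y( supp(α) ∩ B(y,(1+δ)r) ) ≥ 1 − (1/ε)·(1+δ)^{2−d}. -/

import Mathlib

open MeasureTheory Real

/-- The resolvent (Green) kernel of `d`-dimensional Brownian motion killed at an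
independent exponential time with parameter `1/σ²`. -/
noncomputable def greenKernel (d : ℕ) (σ : ℝ) (x y : EuclideanSpace ℝ (Fin d)) : ℝ :=
  (1 / σ ^ 2) * ∫ t in Set.Ioi (0 : ℝ),
    Real.exp (-t / σ ^ 2) * (2 * Real.pi * t) ^ (-(d : ℝ) / 2) *
      Real.exp (-‖x - y‖ ^ 2 / (2 * t))

/-- The topological support of a measure: the set of points all of whose open
neighbourhoods have positive measure. -/
def measureSupport {E : Type*} [TopologicalSpace E] [MeasurableSpace E]
    (α : Measure E) : Set E :=
  {x | ∀ U : Set E, IsOpen U → x ∈ U → 0 < α U}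

open Set

namespace GreenAux

/-- Radial profile of the Green kernel, as a function of the squared distance `c`. -/
noncomputable def gk (d : ℕ) (σ c : ℝ) : ℝ :=
  ∫ t in Set.Ioi (0 : ℝ),
    Real.exp (-t / σ ^ 2) * (2 * Real.pi * t) ^ (-(d : ℝ) / 2) *
      Real.exp (-c / (2 * t))

lemma greenKernel_eq (d : ℕ) (σ : ℝ) (x y : EuclideanSpace ℝ (Fin d)) :
    greenKernel d σ x y = (1 / σ ^ 2) * gk d σ (‖x - y‖ ^ 2) := rfl

/-- Generalized integrand, with an additional time-scaling parameter `b`. -/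
noncomputable def gi (d : ℕ) (σ b c t : ℝ) : ℝ :=
  Real.exp (-(b * t) / σ ^ 2) * (2 * Real.pi * t) ^ (-(d : ℝ) / 2) *
    Real.exp (-c / (2 * t))

lemma gk_eq (d : ℕ) (σ c : ℝ) :
    gk d σ c = ∫ t in Set.Ioi (0 : ℝ), gi d σ 1 c t := by
  refine setIntegral_congr_fun measurableSet_Ioi fun t ht => ?_
  simp [gi, one_mul]

lemma gi_nonneg (d : ℕ) (σ b c : ℝ) {t : ℝ} (ht : 0 < t) : 0 ≤ gi d σ b c t := by
  have h1 : (0:ℝ) ≤ 2 * Real.pi * t := by positivity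
  exact mul_nonneg (mul_nonneg (Real.exp_nonneg _) (Real.rpow_nonneg h1 _))
    (Real.exp_nonneg _)

lemma gi_contOn (d : ℕ) (σ b c : ℝ) : ContinuousOn (gi d σ b c) (Ioi 0) := by
  apply ContinuousOn.mul
  apply ContinuousOn.mul
  · exact (((continuous_const.mul continuous_id).neg.div_const _).rexp).continuousOn
  · apply ContinuousOn.rpow_const
    · exact (continuous_const.mul continuous_id).continuousOn
    · intro t ht
      left
      have := mem_Ioi.mp ht
      positivity
  · apply ContinuousOn.rexp
    apply ContinuousOn.div continuousOn_const
    · exact (continuous_const.mul continuous_id).continuousOn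
    · intro t ht
      have := mem_Ioi.mp ht
      positivity

lemma gi_aesm (d : ℕ) (σ b c : ℝ) :
    AEStronglyMeasurable (gi d σ b c) (volume.restrict (Ioi 0)) :=
  (gi_contOn d σ b c).aestronglyMeasurable measurableSet_Ioi

/-- Pointwise exponential bound for the integrand (with `b = 1`). -/
lemma gi_le (d : ℕ) {σ c : ℝ} (hc : 0 < c) {t : ℝ} (ht : 0 < t) :
    gi d σ 1 c t ≤
      ((2 * Real.pi) ^ (-(d : ℝ) / 2) * (1 + (Nat.factorial d : ℝ) * (2 / c) ^ d)) *
        Real.exp (-(1 / σ ^ 2) * t) := by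
  have hπ : (0:ℝ) < 2 * Real.pi := by positivity
  have key : t ^ (-(d : ℝ) / 2) * Real.exp (-c / (2 * t)) ≤ 1 + (Nat.factorial d : ℝ) * (2 / c) ^ d := by
    rcases le_or_gt 1 t with h1 | h1
    · have ha : t ^ (-(d : ℝ) / 2) ≤ 1 :=
        Real.rpow_le_one_of_one_le_of_nonpos h1
          (by have : (0:ℝ) ≤ (d:ℝ) := Nat.cast_nonneg d; linarith)
      have hb : Real.exp (-c / (2 * t)) ≤ 1 := by
        rw [Real.exp_le_one_iff]
        have : (0:ℝ) < 2 * t := by positivity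
        apply div_nonpos_of_nonpos_of_nonneg <;> nlinarith
      nlinarith [mul_nonneg (Real.rpow_nonneg ht.le (-(d : ℝ) / 2)) (Real.exp_nonneg (-c / (2 * t))), Real.exp_nonneg (-c / (2 * t)), Real.rpow_nonneg ht.le (-(d : ℝ) / 2),
        mul_nonneg (Nat.cast_nonneg (Nat.factorial d)) (pow_nonneg (by positivity : (0:ℝ) ≤ 2 / c) d)]
    · set x := c / (2 * t) with hx
      have hx0 : 0 < x := by positivity
      have hti : 1 ≤ t⁻¹ := (one_le_inv_iff₀).mpr ⟨ht, h1.le⟩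
      have step1 : t ^ (-(d : ℝ) / 2) ≤ t⁻¹ ^ (d : ℕ) := by
        have e1 : t ^ (-(d : ℝ) / 2) = t⁻¹ ^ ((d : ℝ) / 2) := by
          rw [Real.inv_rpow ht.le, ← Real.rpow_neg ht.le, neg_div]
        rw [e1, ← Real.rpow_natCast t⁻¹ d]
        apply Real.rpow_le_rpow_of_exponent_le hti
        have : (0:ℝ) ≤ (d:ℝ) := Nat.cast_nonneg d
        linarith
      have e2 : t⁻¹ = (2 / c) * x := by
        field_simp [hx]
        rw [hx]; field_simp
      have step2 : t⁻¹ ^ (d : ℕ) * Real.exp (-x) ≤ (Nat.factorial d : ℝ) * (2 / c) ^ d := by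
        rw [e2, mul_pow]
        have hxd : x ^ d * Real.exp (-x) ≤ (Nat.factorial d : ℝ) := by
          rw [Real.exp_neg]
          rw [mul_inv_le_iff₀ (Real.exp_pos x)]
          have := Real.pow_div_factorial_le_exp x hx0.le d
          have hfac : (0:ℝ) < (Nat.factorial d : ℝ) := by positivity
          calc x ^ d = ((x ^ d) / (Nat.factorial d : ℝ)) * (Nat.factorial d : ℝ) := by field_simp
            _ ≤ Real.exp x * (Nat.factorial d : ℝ) := by
                apply mul_le_mul_of_nonneg_right this hfac.le
            _ = (Nat.factorial d : ℝ) * Real.exp x := by ring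
        calc (2 / c) ^ d * x ^ d * Real.exp (-x)
            = (2 / c) ^ d * (x ^ d * Real.exp (-x)) := by ring
          _ ≤ (2 / c) ^ d * (Nat.factorial d : ℝ) := by
              apply mul_le_mul_of_nonneg_left hxd (by positivity)
          _ = (Nat.factorial d : ℝ) * (2 / c) ^ d := by ring
      have hexp : Real.exp (-c / (2 * t)) = Real.exp (-x) := by
        rw [hx, neg_div]
      rw [hexp]
      calc t ^ (-(d : ℝ) / 2) * Real.exp (-x) ≤ t⁻¹ ^ (d : ℕ) * Real.exp (-x) :=
            mul_le_mul_of_nonneg_right step1 (Real.exp_nonneg _)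
        _ ≤ (Nat.factorial d : ℝ) * (2 / c) ^ d := step2
        _ ≤ 1 + (Nat.factorial d : ℝ) * (2 / c) ^ d := by linarith
  have hsplit : (2 * Real.pi * t) ^ (-(d : ℝ) / 2)
      = (2 * Real.pi) ^ (-(d : ℝ) / 2) * t ^ (-(d : ℝ) / 2) := by
    rw [Real.mul_rpow hπ.le ht.le]
  have hexp1 : Real.exp (-(1 * t) / σ ^ 2) = Real.exp (-(1 / σ ^ 2) * t) := by
    congr 1; ring
  unfold gi
  rw [hsplit, hexp1]
  have hA : (0:ℝ) ≤ (2 * Real.pi) ^ (-(d : ℝ) / 2) := Real.rpow_nonneg hπ.le _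
  calc Real.exp (-(1 / σ ^ 2) * t) * ((2 * Real.pi) ^ (-(d : ℝ) / 2) * t ^ (-(d : ℝ) / 2)) *
        Real.exp (-c / (2 * t))
      = (2 * Real.pi) ^ (-(d : ℝ) / 2) * (t ^ (-(d : ℝ) / 2) * Real.exp (-c / (2 * t))) *
        Real.exp (-(1 / σ ^ 2) * t) := by ring
    _ ≤ (2 * Real.pi) ^ (-(d : ℝ) / 2) * (1 + (Nat.factorial d : ℝ) * (2 / c) ^ d) *
        Real.exp (-(1 / σ ^ 2) * t) := by
        apply mul_le_mul_of_nonneg_right _ (Real.exp_nonneg _)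
        exact mul_le_mul_of_nonneg_left key hA
    _ = ((2 * Real.pi) ^ (-(d : ℝ) / 2) * (1 + (Nat.factorial d : ℝ) * (2 / c) ^ d)) *
        Real.exp (-(1 / σ ^ 2) * t) := by ring

lemma gi_int_one (d : ℕ) {σ c : ℝ} (hσ : 0 < σ) (hc : 0 < c) :
    IntegrableOn (gi d σ 1 c) (Ioi 0) := by
  have hb : (0:ℝ) < 1 / σ ^ 2 := by positivity
  have hmaj : IntegrableOn
      (fun t => ((2 * Real.pi) ^ (-(d : ℝ) / 2) * (1 + (Nat.factorial d : ℝ) * (2 / c) ^ d)) *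
        Real.exp (-(1 / σ ^ 2) * t)) (Ioi 0) :=
    (exp_neg_integrableOn_Ioi 0 hb).const_mul _
  apply Integrable.mono' hmaj (gi_aesm d σ 1 c)
  filter_upwards [self_mem_ae_restrict (measurableSet_Ioi : MeasurableSet (Ioi (0:ℝ)))]
    with t ht
  rw [Real.norm_of_nonneg (gi_nonneg d σ 1 c (mem_Ioi.mp ht))]
  exact gi_le d hc (mem_Ioi.mp ht)

lemma gi_le_one (d : ℕ) {σ : ℝ} (hσ : 0 < σ) {b c : ℝ} (hb : 1 ≤ b) {t : ℝ} (ht : 0 < t) :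
    gi d σ b c t ≤ gi d σ 1 c t := by
  unfold gi
  have h1 : (0:ℝ) ≤ 2 * Real.pi * t := by positivity
  have hσ2 : (0:ℝ) < σ ^ 2 := by positivity
  have hmono : Real.exp (-(b * t) / σ ^ 2) ≤ Real.exp (-(1 * t) / σ ^ 2) := by
    apply Real.exp_le_exp.mpr
    gcongr <;> nlinarith
  apply mul_le_mul_of_nonneg_right _ (Real.exp_nonneg _)
  exact mul_le_mul_of_nonneg_right hmono (Real.rpow_nonneg h1 _)

lemma gi_int (d : ℕ) {σ b c : ℝ} (hσ : 0 < σ) (hb : 1 ≤ b) (hc : 0 < c) :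
    IntegrableOn (gi d σ b c) (Ioi 0) := by
  apply Integrable.mono' (gi_int_one d hσ hc) (gi_aesm d σ b c)
  filter_upwards [self_mem_ae_restrict (measurableSet_Ioi : MeasurableSet (Ioi (0:ℝ)))]
    with t ht
  rw [Real.norm_of_nonneg (gi_nonneg d σ b c (mem_Ioi.mp ht))]
  exact gi_le_one d hσ hb (mem_Ioi.mp ht)

lemma gk_nonneg (d : ℕ) (σ c : ℝ) : 0 ≤ gk d σ c := by
  rw [gk_eq]
  exact setIntegral_nonneg measurableSet_Ioi fun t ht => gi_nonneg d σ 1 c (mem_Ioi.mp ht)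

lemma gk_anti (d : ℕ) {σ c₁ c₂ : ℝ} (hσ : 0 < σ) (hc₁ : 0 < c₁) (h12 : c₁ ≤ c₂) :
    gk d σ c₂ ≤ gk d σ c₁ := by
  rw [gk_eq, gk_eq]
  apply setIntegral_mono_on (gi_int_one d hσ (lt_of_lt_of_le hc₁ h12)) (gi_int_one d hσ hc₁)
    measurableSet_Ioi
  intro t ht
  have ht0 : 0 < t := mem_Ioi.mp ht
  unfold gi
  have h1 : (0:ℝ) ≤ Real.exp (-(1 * t) / σ ^ 2) * (2 * Real.pi * t) ^ (-(d : ℝ) / 2) :=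
    mul_nonneg (Real.exp_nonneg _) (Real.rpow_nonneg (by positivity) _)
  apply mul_le_mul_of_nonneg_left _ h1
  apply Real.exp_le_exp.mpr
  have h2 : (0:ℝ) < 2 * t := by positivity
  gcongr <;> linarith

lemma gk_scale (d : ℕ) {σ c k : ℝ} (hσ : 0 < σ) (hc : 0 < c) (hk : 1 ≤ k) :
    gk d σ (k ^ 2 * c) ≤ k ^ ((2 : ℝ) - d) * gk d σ c := by
  have hk0 : (0:ℝ) < k := lt_of_lt_of_le one_pos hk
  set b := k ^ 2 with hbdef
  have hb0 : (0:ℝ) < b := by positivity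
  have hb1 : (1:ℝ) ≤ b := by nlinarith
  have hbc : 0 < b * c := by positivity
  -- change of variables t = b * x
  have key : (∫ x in Ioi (0:ℝ), gi d σ 1 (b * c) (b * x)) = b⁻¹ * gk d σ (b * c) := by
    rw [integral_comp_mul_left_Ioi (gi d σ 1 (b * c)) 0 hb0, mul_zero, gk_eq]
    simp [smul_eq_mul]
  -- identify the substituted integrand
  have expand : ∀ x ∈ Ioi (0:ℝ),
      gi d σ 1 (b * c) (b * x) = b ^ (-(d : ℝ) / 2) * gi d σ b c x := by
    intro x hx
    have hx0 : 0 < x := mem_Ioi.mp hx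
    unfold gi
    rw [show 2 * Real.pi * (b * x) = b * (2 * Real.pi * x) by ring,
      Real.mul_rpow hb0.le (by positivity),
      show -(b * c) / (2 * (b * x)) = -c / (2 * x) by field_simp,
      show (1 : ℝ) * (b * x) = b * (1 * x) by ring]
    have hexp : Real.exp (-(b * (1 * x)) / σ ^ 2) = Real.exp (-(b * x) / σ ^ 2) := by
      norm_num
    rw [hexp]
    ring
  have key2 : (∫ x in Ioi (0:ℝ), gi d σ 1 (b * c) (b * x))
      = b ^ (-(d : ℝ) / 2) * ∫ x in Ioi (0:ℝ), gi d σ b c x := by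
    rw [setIntegral_congr_fun measurableSet_Ioi expand, integral_const_mul]
  have mono : (∫ x in Ioi (0:ℝ), gi d σ b c x) ≤ gk d σ c := by
    rw [gk_eq]
    apply setIntegral_mono_on (gi_int d hσ hb1 hc) (gi_int_one d hσ hc) measurableSet_Ioi
    intro x hx
    exact gi_le_one d hσ hb1 (mem_Ioi.mp hx)
  have hnonneg : (0:ℝ) ≤ b ^ (-(d : ℝ) / 2) := Real.rpow_nonneg hb0.le _
  have main : gk d σ (b * c) ≤ (b * b ^ (-(d : ℝ) / 2)) * gk d σ c := by
    have e : gk d σ (b * c) = b * (b ^ (-(d : ℝ) / 2) * ∫ x in Ioi (0:ℝ), gi d σ b c x) := by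
      rw [← key2, key]
      field_simp
    rw [e, mul_assoc]
    apply mul_le_mul_of_nonneg_left _ hb0.le
    exact mul_le_mul_of_nonneg_left mono hnonneg
  have ealg : b * b ^ (-(d : ℝ) / 2) = k ^ ((2 : ℝ) - d) := by
    rw [hbdef]
    rw [show (k:ℝ) ^ 2 = k ^ ((2:ℕ) : ℝ) by rw [Real.rpow_natCast]]
    rw [← Real.rpow_mul hk0.le, ← Real.rpow_add hk0]
    congr 1
    push_cast
    ring
  rw [← ealg]
  exact main

lemma measureSupport_compl_eq {E : Type*} [TopologicalSpace E] [MeasurableSpace E]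
    (α : Measure E) :
    (measureSupport α)ᶜ = ⋃₀ {U : Set E | IsOpen U ∧ α U = 0} := by
  ext x
  simp only [measureSupport, Set.mem_compl_iff, Set.mem_setOf_eq, Set.mem_sUnion]
  push_neg
  constructor
  · rintro ⟨U, hU, hxU, hU0⟩
    exact ⟨U, ⟨hU, by simpa [le_zero_iff] using hU0⟩, hxU⟩
  · rintro ⟨U, ⟨hU, hU0⟩, hxU⟩
    exact ⟨U, hU, hxU, by simp [hU0]⟩

lemma isOpen_measureSupport_compl {E : Type*} [TopologicalSpace E] [MeasurableSpace E]
    (α : Measure E) : IsOpen (measureSupport α)ᶜ := by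
  rw [measureSupport_compl_eq]
  exact isOpen_sUnion fun U hU => hU.1

lemma measureSupport_compl_null {E : Type*} [TopologicalSpace E] [MeasurableSpace E]
    [SecondCountableTopology E] (α : Measure E) :
    α (measureSupport α)ᶜ = 0 := by
  obtain ⟨T, hTc, hTS, hTU⟩ := TopologicalSpace.isOpen_sUnion_countable
    {U : Set E | IsOpen U ∧ α U = 0} (fun U hU => hU.1)
  rw [measureSupport_compl_eq, ← hTU]
  exact (measure_sUnion_null_iff hTc).mpr fun s hs => (hTS hs).2

end GreenAux

open GreenAux in
/-- Theorem 3.1 (asymptotic concentration near the projection I). -/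
theorem stmt0 (d : ℕ) (hd : 3 ≤ d) (σ : ℝ) (hσ : 0 < σ)
    (α : Measure (EuclideanSpace ℝ (Fin d))) [IsProbabilityMeasure α]
    (y : EuclideanSpace ℝ (Fin d)) (hy : α {y} = 0)
    (hw : Integrable (fun x => ‖x - y‖ ^ ((2 : ℝ) - d)) α)
    (hG : Integrable (fun x => greenKernel d σ x y) α)
    (hpos : 0 < ∫ x, greenKernel d σ x y ∂α)
    (ν : Measure (EuclideanSpace ℝ (Fin d)))
    (hν : ∀ A : Set (EuclideanSpace ℝ (Fin d)), MeasurableSet A →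
      ν A = ENNReal.ofReal ((∫ x in A, greenKernel d σ x y ∂α) / ∫ x, greenKernel d σ x y ∂α))
    (ε δ r : ℝ) (hε : 0 < ε) (hδ : 0 < δ) (hr : 0 < r)
    (hmass : ENNReal.ofReal ε < α (Metric.closedBall y r)) :
    ENNReal.ofReal (1 - (1 / ε) * (1 + δ) ^ ((2 : ℝ) - d)) ≤
      ν (measureSupport α ∩ Metric.closedBall y ((1 + δ) * r)) := by
  have hGnn : ∀ x, 0 ≤ greenKernel d σ x y := fun x => by
    rw [greenKernel_eq]
    exact mul_nonneg (by positivity) (gk_nonneg _ _ _)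
  set k : ℝ := 1 + δ with hk
  have hk1 : (1:ℝ) ≤ k := by rw [hk]; linarith
  have hk0 : (0:ℝ) < k := by rw [hk]; linarith
  have hK0 : (0:ℝ) < k ^ ((2:ℝ) - d) := Real.rpow_pos_of_pos hk0 _
  set B1 := Metric.closedBall y r with hB1
  set B2 := Metric.closedBall y (k * r) with hB2
  set C : ℝ := (1 / σ ^ 2) * gk d σ (r ^ 2) with hC
  have hCnn : 0 ≤ C := mul_nonneg (by positivity) (gk_nonneg _ _ _)
  have hB1m : MeasurableSet B1 := measurableSet_closedBall
  have hB2m : MeasurableSet B2 := measurableSet_closedBall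
  -- lower bound for the total mass
  have hsm : MeasurableSet (B1 \ {y}) := hB1m.diff (measurableSet_singleton y)
  have hint_eq : ∫ x in B1 \ {y}, greenKernel d σ x y ∂α
      = ∫ x in B1, greenKernel d σ x y ∂α := by
    apply setIntegral_congr_set
    apply diff_ae_eq_self.mpr
    exact le_antisymm (le_trans (measure_mono Set.inter_subset_right) hy.le) zero_le
  have hms : α (B1 \ {y}) = α B1 := measure_diff_null hy
  have hge : C * (α (B1 \ {y})).toReal ≤ ∫ x in B1 \ {y}, greenKernel d σ x y ∂α := by
    apply setIntegral_ge_of_const_le_real hsm (measure_ne_top α _) _ hG.integrableOn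
    intro x hx
    obtain ⟨hxB, hxy⟩ := hx
    have hne : x - y ≠ 0 := sub_ne_zero.mpr (by simpa using hxy)
    have h1 : 0 < ‖x - y‖ := norm_pos_iff.mpr hne
    have h2 : ‖x - y‖ ≤ r := by
      rw [hB1, Metric.mem_closedBall, dist_eq_norm] at hxB
      exact hxB
    rw [greenKernel_eq, hC]
    apply mul_le_mul_of_nonneg_left _ (by positivity)
    exact gk_anti d hσ (by positivity) (by nlinarith)
  have htr : ε ≤ (α (B1 \ {y})).toReal := by
    rw [hms]
    exact ((ENNReal.ofReal_lt_iff_lt_toReal hε.le (measure_ne_top α _)).mp hmass).le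
  have hlow : ε * C ≤ ∫ x, greenKernel d σ x y ∂α := by
    have h3 : ∫ x in B1, greenKernel d σ x y ∂α ≤ ∫ x, greenKernel d σ x y ∂α :=
      setIntegral_le_integral hG (ae_of_all _ hGnn)
    have h4 : C * ε ≤ C * (α (B1 \ {y})).toReal := mul_le_mul_of_nonneg_left htr hCnn
    calc ε * C = C * ε := by ring
      _ ≤ C * (α (B1 \ {y})).toReal := h4
      _ ≤ ∫ x in B1 \ {y}, greenKernel d σ x y ∂α := hge
      _ = ∫ x in B1, greenKernel d σ x y ∂α := hint_eq
      _ ≤ ∫ x, greenKernel d σ x y ∂α := h3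
  -- upper bound outside the enlarged ball
  have hup : ∫ x in B2ᶜ, greenKernel d σ x y ∂α ≤ k ^ ((2:ℝ) - d) * C := by
    have hpt : ∀ x ∈ B2ᶜ,
        greenKernel d σ x y ≤ (1 / σ ^ 2) * (k ^ ((2:ℝ) - d) * gk d σ (r ^ 2)) := by
      intro x hx
      have h2 : k * r < ‖x - y‖ := by
        rw [Set.mem_compl_iff, hB2, Metric.mem_closedBall, not_le, dist_eq_norm] at hx
        exact hx
      have hkr : 0 < k * r := by positivity
      rw [greenKernel_eq]
      apply mul_le_mul_of_nonneg_left _ (by positivity)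
      calc gk d σ (‖x - y‖ ^ 2) ≤ gk d σ (k ^ 2 * r ^ 2) :=
            gk_anti d hσ (by positivity) (by nlinarith)
        _ ≤ k ^ ((2:ℝ) - d) * gk d σ (r ^ 2) := gk_scale d hσ (by positivity) hk1
    have hconst : IntegrableOn
        (fun _ => (1 / σ ^ 2) * (k ^ ((2:ℝ) - d) * gk d σ (r ^ 2))) B2ᶜ α :=
      (integrableOn_const_iff).mpr (Or.inr (measure_lt_top α _))
    have htR : (α B2ᶜ).toReal ≤ 1 := by
      have h := prob_le_one (μ := α) (s := B2ᶜ)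
      simpa using ENNReal.toReal_mono ENNReal.one_ne_top h
    have hcn : (0:ℝ) ≤ (1 / σ ^ 2) * (k ^ ((2:ℝ) - d) * gk d σ (r ^ 2)) :=
      mul_nonneg (by positivity) (mul_nonneg hK0.le (gk_nonneg _ _ _))
    calc ∫ x in B2ᶜ, greenKernel d σ x y ∂α
        ≤ ∫ _x in B2ᶜ, (1 / σ ^ 2) * (k ^ ((2:ℝ) - d) * gk d σ (r ^ 2)) ∂α :=
          setIntegral_mono_on hG.integrableOn hconst hB2m.compl hpt
      _ = (α B2ᶜ).toReal * ((1 / σ ^ 2) * (k ^ ((2:ℝ) - d) * gk d σ (r ^ 2))) := by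
          rw [setIntegral_const, smul_eq_mul]
          rfl
      _ ≤ 1 * ((1 / σ ^ 2) * (k ^ ((2:ℝ) - d) * gk d σ (r ^ 2))) :=
          mul_le_mul_of_nonneg_right htR hcn
      _ = k ^ ((2:ℝ) - d) * C := by rw [hC]; ring
  -- putting things together
  have hAm : MeasurableSet (measureSupport α ∩ B2) := by
    have hopen : IsOpen (measureSupport α)ᶜ := isOpen_measureSupport_compl α
    have hms' : MeasurableSet (measureSupport α) := by
      have := hopen.measurableSet.compl
      simpa [compl_compl] using this
    exact hms'.inter hB2m
  have hEq : ∫ x in measureSupport α ∩ B2, greenKernel d σ x y ∂α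
      = ∫ x in B2, greenKernel d σ x y ∂α := by
    apply setIntegral_congr_set
    exact inter_ae_eq_right_of_ae_eq_univ (ae_eq_univ.mpr (measureSupport_compl_null α))
  rw [hν _ hAm, hEq]
  apply ENNReal.ofReal_le_ofReal
  rw [le_div_iff₀ hpos]
  have hsplit : (∫ x in B2, greenKernel d σ x y ∂α) + ∫ x in B2ᶜ, greenKernel d σ x y ∂α
      = ∫ x, greenKernel d σ x y ∂α := integral_add_compl hB2m hG
  have h6 : ε * (∫ x in B2ᶜ, greenKernel d σ x y ∂α)
      ≤ k ^ ((2:ℝ) - d) * ∫ x, greenKernel d σ x y ∂α := by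
    nlinarith [mul_le_mul_of_nonneg_left hup hε.le, mul_le_mul_of_nonneg_left hlow hK0.le]
  have e : (1 - 1 / ε * k ^ ((2:ℝ) - d)) * ∫ x, greenKernel d σ x y ∂α
      = (∫ x, greenKernel d σ x y ∂α)
        - (k ^ ((2:ℝ) - d) * ∫ x, greenKernel d σ x y ∂α) / ε := by
    field_simp
  have h7 : ∫ x in B2ᶜ, greenKernel d σ x y ∂α
      ≤ (k ^ ((2:ℝ) - d) * ∫ x, greenKernel d σ x y ∂α) / ε :=
    (le_div_iff₀ hε).mpr (by linarith [h6])
  rw [e]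
  linarith [hsplit, h7]
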